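/- Let V be a finite vertex set and N : V → Finset V with v ∉ N(v) for all v, and let H be any clustered neighborhood hypergraph for N. Then two vertices u, v are connected in H if and only if they are connected in the pairwise neighborhood graph G(N). -/

import Mathlib

/-- `H` is a clustered neighborhood hypergraph for the neighbor assignment `N`. -/
def IsClusteredNeighborhoodHypergraph {V : Type*} [DecidableEq V]
    (N : V → Finset V) (H : Set (Finset V)) : Prop :=
  (∀ h ∈ H, 2 ≤ h.card) ∧
  (∀ h ∈ H, ∃ z : V, ∃ C : Finset V, C.Nonempty ∧ C ⊆ N z ∧ h = insert z C) ∧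
  (∀ v : V, ∀ u ∈ N v, ∃ h ∈ H, v ∈ h ∧ u ∈ h)

/-- Connectivity in a hypergraph: a sequence of vertices in which consecutive
vertices share a hyperedge. -/
def HyperConnected {V : Type*} (H : Set (Finset V)) (u v : V) : Prop :=
  Relation.ReflTransGen (fun a b => ∃ h ∈ H, a ∈ h ∧ b ∈ h) u v

/-- The pairwise neighborhood graph `G(N)`: `u` and `w` are adjacent iff `u ≠ w`
and `u ∈ N w` or `w ∈ N u`. -/
def pairwiseNeighborhoodGraph {V : Type*} (N : V → Finset V) : SimpleGraph V where
  Adj u w := u ≠ w ∧ (u ∈ N w ∨ w ∈ N u)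
  symm := ⟨fun _ _ ⟨hne, h⟩ => ⟨hne.symm, h.symm⟩⟩
  loopless := ⟨fun _ ⟨hne, _⟩ => hne rfl⟩

/-- Connectivity in a clustered neighborhood hypergraph for `N` agrees with
reachability in the pairwise neighborhood graph `G(N)`. -/
theorem hyperConnected_iff_reachable_pairwiseNeighborhoodGraph
    {V : Type*} [Fintype V] [DecidableEq V]
    (N : V → Finset V) (hN : ∀ v, v ∉ N v)
    (H : Set (Finset V))
    (hH : IsClusteredNeighborhoodHypergraph N H)
    (u v : V) :
    HyperConnected H u v ↔ (pairwiseNeighborhoodGraph N).Reachable u v := by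
  obtain ⟨hcard, hstruct, hcover⟩ := hH
  constructor
  · intro hconn
    induction hconn with
    | refl => exact SimpleGraph.Reachable.refl u
    | tail _ hstep ih =>
      rename_i b c _
      refine ih.trans ?_
      obtain ⟨h, hhH, hb, hc⟩ := hstep
      by_cases hbc : b = c
      · subst hbc; exact SimpleGraph.Reachable.refl b
      obtain ⟨z, C, _, hCN, rfl⟩ := hstruct h hhH
      have key : ∀ x ∈ insert z C, (pairwiseNeighborhoodGraph N).Reachable z x := by
        intro x hx
        rcases Finset.mem_insert.mp hx with rfl | hxC
        · exact SimpleGraph.Reachable.refl x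
        · by_cases hzx : z = x
          · subst hzx; exact SimpleGraph.Reachable.refl z
          · exact SimpleGraph.Adj.reachable (G := pairwiseNeighborhoodGraph N) (show z ≠ x ∧ (z ∈ N x ∨ x ∈ N z) from ⟨hzx, Or.inr (hCN hxC)⟩)
      exact (key b hb).symm.trans (key c hc)
  · intro hreach
    rw [SimpleGraph.reachable_iff_reflTransGen] at hreach
    induction hreach with
    | refl => exact Relation.ReflTransGen.refl
    | tail _ hadj ih =>
      rename_i a b _
      refine Relation.ReflTransGen.tail ih ?_
      obtain ⟨_, hab⟩ := (show a ≠ b ∧ (a ∈ N b ∨ b ∈ N a) from hadj)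
      rcases hab with h1 | h1
      · obtain ⟨h, hhH, hb, ha⟩ := hcover b a h1
        exact ⟨h, hhH, ha, hb⟩
      · obtain ⟨h, hhH, ha, hb⟩ := hcover a b h1
        exact ⟨h, hhH, ha, hb⟩
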